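/- For real vectors h, h' ∈ ℝ³, the determinant of H = Σᵢ hᵢSᵢ + Σᵢ hᵢ'Tᵢ equals (|h|² − |h'|²)², i.e., det H = p² where p = |h|² − |h'|². -/

import Mathlib

open Matrix Complex

/-- The self-dual generators S₁ = diag(τ₁,−τ₁), S₂ = diag(τ₂,τ₂), S₃ = diag(τ₃,−τ₃). -/
noncomputable def S : Fin 3 → Matrix (Fin 4) (Fin 4) ℂ
  | 0 => !![0, 1, 0, 0; 1, 0, 0, 0; 0, 0, 0, -1; 0, 0, -1, 0]
  | 1 => !![0, -Complex.I, 0, 0; Complex.I, 0, 0, 0; 0, 0, 0, -Complex.I; 0, 0, Complex.I, 0]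
  | 2 => !![1, 0, 0, 0; 0, -1, 0, 0; 0, 0, -1, 0; 0, 0, 0, 1]

/-- The anti-self-dual generators T₁ = [[0,iτ₂],[−iτ₂,0]], T₂ = [[0,τ₂],[τ₂,0]], T₃ = diag(I₂,−I₂). -/
noncomputable def T : Fin 3 → Matrix (Fin 4) (Fin 4) ℂ
  | 0 => !![0, 0, 0, 1; 0, 0, -1, 0; 0, -1, 0, 0; 1, 0, 0, 0]
  | 1 => !![0, 0, 0, -Complex.I; 0, 0, Complex.I, 0; 0, -Complex.I, 0, 0; Complex.I, 0, 0, 0]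
  | 2 => !![1, 0, 0, 0; 0, 1, 0, 0; 0, 0, -1, 0; 0, 0, 0, -1]

set_option maxHeartbeats 1000000 in
lemma det_fin_four' (M : Matrix (Fin 4) (Fin 4) ℂ) :
    M.det =
      M 0 0 * (M 1 1 * (M 2 2 * M 3 3 - M 2 3 * M 3 2) - M 1 2 * (M 2 1 * M 3 3 - M 2 3 * M 3 1)
        + M 1 3 * (M 2 1 * M 3 2 - M 2 2 * M 3 1))
      - M 0 1 * (M 1 0 * (M 2 2 * M 3 3 - M 2 3 * M 3 2) - M 1 2 * (M 2 0 * M 3 3 - M 2 3 * M 3 0)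
        + M 1 3 * (M 2 0 * M 3 2 - M 2 2 * M 3 0))
      + M 0 2 * (M 1 0 * (M 2 1 * M 3 3 - M 2 3 * M 3 1) - M 1 1 * (M 2 0 * M 3 3 - M 2 3 * M 3 0)
        + M 1 3 * (M 2 0 * M 3 1 - M 2 1 * M 3 0))
      - M 0 3 * (M 1 0 * (M 2 1 * M 3 2 - M 2 2 * M 3 1) - M 1 1 * (M 2 0 * M 3 2 - M 2 2 * M 3 0)
        + M 1 2 * (M 2 0 * M 3 1 - M 2 1 * M 3 0)) := by
  simp [Matrix.det_succ_row_zero, Fin.sum_univ_succ, Fin.succAbove]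
  norm_num [show ((2:Fin 3).succ) = (3:Fin 4) from rfl, show (Fin.castSucc (2:Fin 3)) = (2:Fin 4) from rfl]
  ring

set_option maxHeartbeats 2000000 in
/-- det(Σ hᵢSᵢ + Σ hᵢ'Tᵢ) = (|h|² − |h'|²)². -/
theorem H_det (h h' : Fin 3 → ℝ) :
    Matrix.det (∑ i : Fin 3, (h i : ℂ) • S i + ∑ i : Fin 3, (h' i : ℂ) • T i) =
      (((∑ i : Fin 3, h i ^ 2) - ∑ i : Fin 3, h' i ^ 2 : ℝ) : ℂ) ^ 2 := by
  rw [det_fin_four']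
  simp only [Fin.sum_univ_three, S, T, Matrix.add_apply, Matrix.smul_apply, smul_eq_mul,
    Matrix.cons_val', Matrix.cons_val_zero, Matrix.cons_val_one, Matrix.head_cons,
    Matrix.empty_val', Matrix.cons_val_fin_one, Matrix.of_apply, Matrix.cons_val_two,
    Matrix.cons_val_three, Matrix.head_fin_const, Matrix.tail_cons]
  push_cast
  ring_nf
  simp only [show (Complex.I:ℂ)^4 = 1 by simp [pow_succ, Complex.I_sq], Complex.I_sq]
  ring
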